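/- For sl_2, the dominant monomials of χ_q(W_{k+1,a})·χ_q(W_{k-1,aq^2}) are exactly M, M A_{aq^{2k-1}}^{-1}, ..., M A_{aq^{2k-1}}^{-1}···A_{aq^3}^{-1} where M = m_{k+1,a} m_{k-1,aq^2} = m_{k,a}m_{k,aq^2}, each with coefficient 1; in particular M A_{aq^{2k-1}}^{-1}···A_{aq}^{-1} is a dominant monomial of χ_q(W_{k,a})χ_q(W_{k,aq^2}) but not of χ_q(W_{k+1,a})χ_q(W_{k-1,aq^2}). -/

import Mathlib

noncomputable section

/-- Laurent monomials in the variables `Y_b`, `b ∈ ℂˣ`, written additively: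
a monomial is its finitely supported exponent function. -/
abbrev Mon : Type := ℂˣ →₀ ℤ

/-- The Laurent polynomial ring `ℤ[Y_b^±]`. -/
abbrev Rng : Type := AddMonoidAlgebra ℤ Mon

/-- The variable `Y_b` as a monomial. -/
def Y (b : ℂˣ) : Mon := Finsupp.single b 1

/-- A monomial viewed as an element of the Laurent polynomial ring. -/
def X (m : Mon) : Rng := AddMonoidAlgebra.single m 1

/-- The monomial `A_b = Y_{bq⁻¹} Y_{bq}` (sl₂ case). -/
def Amon (q b : ℂˣ) : Mon := Y (b * q⁻¹) + Y (b * q)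

/-- The highest weight monomial `m_{k,a} = Y_a Y_{aq²} ⋯ Y_{aq^{2(k-1)}}`. -/
def mka (q : ℂˣ) (k : ℕ) (a : ℂˣ) : Mon := ∑ s ∈ Finset.range k, Y (a * q ^ (2 * s))

/-- The normalized q-character of the sl₂ Kirillov-Reshetikhin module, given by the
nested formula `1 + A_{aq^{2k-1}}⁻¹(1 + A_{aq^{2k-3}}⁻¹(1 + ⋯ (1 + A_{aq}⁻¹)⋯))`. -/
def Nchi (q : ℂˣ) : ℕ → ℂˣ → Rng
  | 0, _ => 1
  | (k+1), a => 1 + X (-(Amon q (a * q ^ (2 * k + 1)))) * Nchi q k a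

/-- The q-character `χ_q(W_{k,a}) = m_{k,a}(1 + A_{aq^{2k-1}}⁻¹(1 + ⋯ (1 + A_{aq}⁻¹)⋯))`. -/
def chiW (q : ℂˣ) (k : ℕ) (a : ℂˣ) : Rng := X (mka q k a) * Nchi q k a

/-- A monomial `m ≠ 1` is right-negative if for each `a`, at the maximal `q`-power shift
`L` where `m` is supported on `a q^L`, the exponent is negative. -/
def RightNeg (q : ℂˣ) (m : Mon) : Prop :=
  m ≠ 0 ∧ ∀ (a : ℂˣ) (L : ℤ), m (a * q ^ L) ≠ 0 →
    (∀ l : ℤ, L < l → m (a * q ^ l) = 0) → m (a * q ^ L) < 0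

/-- A monomial is dominant if all its exponents are nonnegative. -/
def Dominant (m : Mon) : Prop := ∀ b, 0 ≤ m b

namespace KRaux

def sgl (n : ℤ) : (ℤ →₀ ℤ) := Finsupp.single n 1
def Ap (n : ℤ) : (ℤ →₀ ℤ) := sgl (n-1) + sgl (n+1)
def mk' (r : ℕ) (o : ℤ) : (ℤ →₀ ℤ) := ∑ s ∈ Finset.range r, sgl (o + 2*(s:ℤ))
def Vp (K : ℤ) (r : ℕ) : (ℤ →₀ ℤ) := ∑ j ∈ Finset.range r, Ap (2*K - 1 - 2*(j:ℤ))
def Wp (o : ℤ) (n r : ℕ) : (ℤ →₀ ℤ) := ∑ j ∈ Finset.range r, Ap (o + 2*(n:ℤ) - 1 - 2*(j:ℤ))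

/- ------- combinatorial layer (over ℤ →₀ ℤ) ------- -/

lemma count_cast (r : ℕ) (c : ℤ) :
    (∑ j ∈ Finset.range r, if (j:ℤ) = c then (1:ℤ) else 0)
      = if 0 ≤ c ∧ c < r then 1 else 0 := by
  induction r with
  | zero => simp
  | succ r ih =>
    rw [Finset.sum_range_succ, ih]
    push_cast
    split_ifs <;> omega

lemma Vp_apply (K : ℤ) (r : ℕ) (n : ℤ) :
    Vp K r n = (∑ j ∈ Finset.range r, if 2*K-2-2*(j:ℤ) = n then (1:ℤ) else 0)
             + (∑ j ∈ Finset.range r, if 2*K-2*(j:ℤ) = n then (1:ℤ) else 0) := by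
  unfold Vp
  rw [Finsupp.finset_sum_apply, ← Finset.sum_add_distrib]
  refine Finset.sum_congr rfl fun j _ => ?_
  have h1 : 2*K-1-2*(j:ℤ) - 1 = 2*K-2-2*(j:ℤ) := by ring
  have h2 : 2*K-1-2*(j:ℤ) + 1 = 2*K-2*(j:ℤ) := by ring
  rw [Ap, sgl, sgl, Finsupp.add_apply, Finsupp.single_apply, Finsupp.single_apply, h1, h2]

lemma Vp_apply_top (K : ℤ) (r : ℕ) : Vp K r (2*K+2) = 0 := by
  rw [Vp_apply]
  rw [Finset.sum_eq_zero fun j _ => if_neg (by omega),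
    Finset.sum_eq_zero fun j _ => if_neg (by omega)]
  ring

lemma Vp_eval (K : ℤ) (r u : ℕ) :
    Vp K r (2*K-2*(u:ℤ)) = (if 0 ≤ (u:ℤ)-1 ∧ (u:ℤ)-1 < r then 1 else 0)
      + (if (u:ℤ) < r then 1 else 0) := by
  rw [Vp_apply]
  have e1 : (∑ j ∈ Finset.range r, if 2*K-2-2*(j:ℤ) = 2*K-2*(u:ℤ) then (1:ℤ) else 0)
      = ∑ j ∈ Finset.range r, if (j:ℤ) = (u:ℤ)-1 then (1:ℤ) else 0 :=
    Finset.sum_congr rfl fun j _ => if_congr (by omega) rfl rfl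
  have e2 : (∑ j ∈ Finset.range r, if 2*K-2*(j:ℤ) = 2*K-2*(u:ℤ) then (1:ℤ) else 0)
      = ∑ j ∈ Finset.range r, if (j:ℤ) = (u:ℤ) then (1:ℤ) else 0 :=
    Finset.sum_congr rfl fun j _ => if_congr (by omega) rfl rfl
  rw [e1, e2, count_cast, count_cast]
  congr 1
  exact if_congr (by omega) rfl rfl

lemma Vp_inj_aux (K : ℤ) {u t : ℕ} (h : u < t) : Vp K u ≠ Vp K t := by
  intro hEq
  have h2 := DFunLike.congr_fun hEq (2*K-2*(u:ℤ))
  rw [Vp_eval, Vp_eval] at h2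
  split_ifs at h2 <;> omega

lemma Vp_inj (K : ℤ) : Function.Injective (Vp K) := by
  intro u t h
  rcases lt_trichotomy u t with h' | h' | h'
  · exact absurd h (Vp_inj_aux K h')
  · exact h'
  · exact absurd h.symm (Vp_inj_aux K h')

lemma mk'_nonneg (r : ℕ) (o n : ℤ) : 0 ≤ mk' r o n := by
  unfold mk'
  rw [Finsupp.finset_sum_apply]
  refine Finset.sum_nonneg fun s _ => ?_
  rw [sgl, Finsupp.single_apply]
  split <;> norm_num

lemma M_top (m : ℕ) : (mk' (m+1) 0 + mk' (m+1) 2) (2*((m:ℤ)+1)+2) = 0 := by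
  rw [Finsupp.add_apply]
  unfold mk'
  rw [Finsupp.finset_sum_apply, Finsupp.finset_sum_apply]
  rw [Finset.sum_eq_zero fun s hs => ?_, Finset.sum_eq_zero fun s hs => ?_]
  · ring
  · rw [sgl, Finsupp.single_apply, if_neg]
    have := Finset.mem_range.1 hs; omega
  · rw [sgl, Finsupp.single_apply, if_neg]
    have := Finset.mem_range.1 hs; omega

lemma M_top' (m : ℕ) : (mk' (m+1) 0 + mk' (m+1) 2) (2*((m+1:ℕ):ℤ)+2) = 0 := by
  have h : ((m+1:ℕ):ℤ) = (m:ℤ)+1 := by push_cast; ring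
  rw [h]; exact M_top m

lemma Ap_top (K : ℤ) : Ap (2*K+1) (2*K+2) = 1 := by
  rw [Ap, sgl, sgl, Finsupp.add_apply, Finsupp.single_apply, Finsupp.single_apply,
    if_neg (by omega), if_pos (by ring)]
  ring

lemma mk'_succ (r : ℕ) (o : ℤ) : mk' (r+1) o = mk' r o + sgl (o + 2*(r:ℤ)) := by
  rw [mk', mk', Finset.sum_range_succ]

lemma Msplit (m : ℕ) : mk' (m+1+1) 0 + mk' m 2 = mk' (m+1) 0 + mk' (m+1) 2 := by
  have h1 : mk' (m+2) 0 = mk' (m+1) 0 + sgl (0 + 2*((m:ℤ)+1)) := by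
    rw [mk'_succ]; push_cast; ring_nf
  rw [h1, mk'_succ m 2]
  have : (0:ℤ) + 2*((m:ℤ)+1) = 2 + 2*(m:ℤ) := by ring
  rw [this]
  abel

lemma Mid (m : ℕ) : ∀ t ≤ m+1, mk' (m+1) 0 + mk' (m+1) 2
    = (mk' (m+1-t) 0 + mk' (m+1-t) 2) + Vp ((m:ℤ)+1) t := by
  intro t
  induction t with
  | zero => intro _; simp [Vp]
  | succ t ih =>
    intro h
    rw [ih (by omega)]
    have e1 : m+1-t = (m-t)+1 := by omega
    have e2 : m+1-(t+1) = m-t := by omega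
    have c : ((m-t : ℕ):ℤ) = (m:ℤ) - t := by omega
    have hV : Vp ((m:ℤ)+1) (t+1) = Vp ((m:ℤ)+1) t + Ap (2*((m:ℤ)+1) - 1 - 2*(t:ℤ)) := by
      rw [Vp, Vp, Finset.sum_range_succ]
    rw [e1, e2, hV, mk'_succ, mk'_succ, c]
    have hA : Ap (2*((m:ℤ)+1) - 1 - 2*(t:ℤ))
        = sgl (0 + 2*((m:ℤ)-t)) + sgl (2 + 2*((m:ℤ)-t)) := by
      rw [Ap]
      have i1 : 2*((m:ℤ)+1) - 1 - 2*(t:ℤ) - 1 = 0 + 2*((m:ℤ)-t) := by ring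
      have i2 : 2*((m:ℤ)+1) - 1 - 2*(t:ℤ) + 1 = 2 + 2*((m:ℤ)-t) := by ring
      rw [i1, i2]
    rw [hA]
    abel

lemma Mid' (m : ℕ) : ∀ t ≤ m+1, mk' (m+1) 0 + mk' (m+1) 2
    = (mk' (m+1-t) 0 + mk' (m+1-t) 2) + Vp ((m+1:ℕ):ℤ) t := by
  have h : ((m+1:ℕ):ℤ) = (m:ℤ)+1 := by push_cast; ring
  rw [h]; exact Mid m

/- ------- transport layer ------- -/

def ee (q a : ℂˣ) (n : ℤ) : ℂˣ := a * q ^ n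

def phi (q a : ℂˣ) : (ℤ →₀ ℤ) →+ Mon := Finsupp.mapDomain.addMonoidHom (ee q a)

variable {q a : ℂˣ}

lemma ee_inj (hq : ∀ n : ℤ, n ≠ 0 → q ^ n ≠ 1) : Function.Injective (ee q a) := by
  intro m n h
  by_contra hne
  have h1 : q ^ m = q ^ n := mul_left_cancel h
  have h2 : q ^ (m - n) = 1 := by
    rw [zpow_sub, h1]
    simp
  exact hq (m - n) (sub_ne_zero.2 hne) h2

lemma phi_sgl (n : ℤ) : phi q a (sgl n) = Y (ee q a n) := by
  rw [phi, sgl, Y, Finsupp.mapDomain.addMonoidHom_apply, Finsupp.mapDomain_single]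

lemma Amon_phi (n : ℤ) : Amon q (ee q a n) = phi q a (Ap n) := by
  rw [Ap, map_add, phi_sgl, phi_sgl, Amon]
  have h1 : ee q a n * q⁻¹ = ee q a (n - 1) := by
    rw [ee, ee, zpow_sub_one, mul_assoc]
  have h2 : ee q a n * q = ee q a (n + 1) := by
    rw [ee, ee, zpow_add_one, mul_assoc]
  rw [h1, h2]

lemma mka_phi (o : ℤ) (r : ℕ) : mka q r (ee q a o) = phi q a (mk' r o) := by
  rw [mka, mk', map_sum]
  refine Finset.sum_congr rfl fun s _ => ?_
  rw [phi_sgl]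
  congr 1
  rw [ee, ee, mul_assoc, ← zpow_natCast q (2*s), ← zpow_add]
  push_cast
  ring_nf

lemma Wp_zero (o : ℤ) (n : ℕ) : Wp o n 0 = 0 := by simp [Wp]

lemma Wp_succ' (o : ℤ) (n s : ℕ) : Wp o (n+1) (s+1) = Ap (o + 2*(n:ℤ) + 1) + Wp o n s := by
  rw [Wp, Wp, Finset.sum_range_succ']
  have e1 : (∑ j ∈ Finset.range s, Ap (o + 2*((n+1:ℕ):ℤ) - 1 - 2*(((j+1:ℕ)):ℤ)))
      = ∑ j ∈ Finset.range s, Ap (o + 2*(n:ℤ) - 1 - 2*(j:ℤ)) :=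
    Finset.sum_congr rfl fun j _ => by congr 1; push_cast; ring
  have e0 : Ap (o + 2*((n+1:ℕ):ℤ) - 1 - 2*(((0:ℕ)):ℤ)) = Ap (o + 2*(n:ℤ) + 1) := by
    congr 1; push_cast; ring
  rw [e1, e0, add_comm]

lemma Wp_as_Vp0 (n s : ℕ) : Wp 0 n s = Vp ((n:ℕ):ℤ) s := by
  rw [Wp, Vp]
  exact Finset.sum_congr rfl fun j _ => by congr 1; ring

lemma Wp_as_Vp2 (n s : ℕ) : Wp 2 n s = Vp (((n+1:ℕ)):ℤ) s := by
  rw [Wp, Vp]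
  exact Finset.sum_congr rfl fun j _ => by congr 1; push_cast; ring

lemma Wp0_succ (n s : ℕ) : Wp 0 (n+1+1) (s+1) = Ap (2*((n+1:ℕ):ℤ)+1) + Vp ((n+1:ℕ):ℤ) s := by
  rw [show n+1+1 = (n+1)+1 from rfl, Wp_succ', Wp_as_Vp0]
  have h : (0:ℤ) + 2*((n+1:ℕ):ℤ) + 1 = 2*((n+1:ℕ):ℤ)+1 := by push_cast; ring
  rw [h]

lemma Nchi_phi (o : ℤ) (n : ℕ) :
    Nchi q n (ee q a o) = ∑ s ∈ Finset.range (n+1), X (phi q a (-(Wp o n s))) := by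
  induction n with
  | zero =>
    rw [Nchi]
    rw [Finset.sum_range_one, Wp_zero, neg_zero, map_zero]
    rw [X, AddMonoidAlgebra.one_def]
  | succ n ih =>
    rw [Nchi]
    have hpow : ee q a o * q ^ (2 * n + 1) = ee q a (o + 2*(n:ℤ) + 1) := by
      rw [ee, ee, mul_assoc, ← zpow_natCast q (2*n+1), ← zpow_add]
      congr 1
      push_cast; ring
    rw [hpow, Amon_phi, ih, Finset.mul_sum]
    rw [Finset.sum_range_succ' (n := n+1)]
    have h0 : X (phi q a (-(Wp o (n+1) 0))) = 1 := by
      rw [Wp_zero, neg_zero, map_zero, X, AddMonoidAlgebra.one_def]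
    rw [h0, add_comm]
    congr 1
    refine Finset.sum_congr rfl fun s _ => ?_
    rw [X, X, X, AddMonoidAlgebra.single_mul_single, one_mul]
    congr 1
    rw [Wp_succ', neg_add, map_add, map_neg, map_neg]

lemma chiW_phi (o : ℤ) (n : ℕ) :
    chiW q n (ee q a o) = ∑ s ∈ Finset.range (n+1), X (phi q a (mk' n o - Wp o n s)) := by
  rw [chiW, Nchi_phi, mka_phi, Finset.mul_sum]
  refine Finset.sum_congr rfl fun s _ => ?_
  rw [X, X, X, AddMonoidAlgebra.single_mul_single, one_mul]
  congr 1
  rw [sub_eq_add_neg, map_add, map_neg]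

lemma prod_phi (o₁ o₂ : ℤ) (n₁ n₂ : ℕ) :
    chiW q n₁ (ee q a o₁) * chiW q n₂ (ee q a o₂)
      = ∑ s ∈ Finset.range (n₁+1), ∑ u ∈ Finset.range (n₂+1),
          X (phi q a ((mk' n₁ o₁ + mk' n₂ o₂) - Wp o₁ n₁ s - Wp o₂ n₂ u)) := by
  rw [chiW_phi, chiW_phi, Finset.sum_mul_sum]
  refine Finset.sum_congr rfl fun s _ => Finset.sum_congr rfl fun u _ => ?_
  rw [X, X, X, AddMonoidAlgebra.single_mul_single, one_mul]
  congr 1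
  rw [← map_add]
  congr 1
  abel

lemma prod_phi' (o₁ o₂ : ℤ) (b₁ b₂ : ℂˣ) (h₁ : b₁ = ee q a o₁) (h₂ : b₂ = ee q a o₂)
    (n₁ n₂ : ℕ) :
    chiW q n₁ b₁ * chiW q n₂ b₂
      = ∑ s ∈ Finset.range (n₁+1), ∑ u ∈ Finset.range (n₂+1),
          X (phi q a ((mk' n₁ o₁ + mk' n₂ o₂) - Wp o₁ n₁ s - Wp o₂ n₂ u)) := by
  rw [h₁, h₂, prod_phi]

end KRaux

section MainProof


open KRaux


lemma happly (S : Finset ℕ) (f : ℕ → Mon) (mm : Mon) :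
    ((∑ u ∈ S, X (f u)) : Rng).coeff mm = ∑ u ∈ S, if f u = mm then (1:ℤ) else 0 := by
  rw [AddMonoidAlgebra.coeff_sum, Finsupp.finset_sum_apply]
  exact Finset.sum_congr rfl fun u _ => Finsupp.single_apply

/-- for sl₂ the dominant monomials of `χ_q(W_{k+1,a})·χ_q(W_{k-1,aq²})` are
exactly `M, M A_{aq^{2k-1}}⁻¹, …, M A_{aq^{2k-1}}⁻¹⋯A_{aq³}⁻¹` with
`M = m_{k+1,a} m_{k-1,aq²} = m_{k,a} m_{k,aq²}`, each with coefficient `1`; in particular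
`M A_{aq^{2k-1}}⁻¹⋯A_{aq}⁻¹` is a dominant monomial of `χ_q(W_{k,a})χ_q(W_{k,aq²})` but not
of `χ_q(W_{k+1,a})χ_q(W_{k-1,aq²})`. -/
theorem kr_sl2_dominant_monomials' (q : ℂˣ) (hq : ∀ n : ℤ, n ≠ 0 → q ^ n ≠ 1)
    (k : ℕ) (hk : 1 ≤ k) (a : ℂˣ) :
    (∀ m : Mon,
        (m ∈ (chiW q (k + 1) a * chiW q (k - 1) (a * q ^ 2)).coeff.support ∧ Dominant m) ↔
          ∃ t ≤ k - 1, m = mka q k a + mka q k (a * q ^ 2)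
            - ∑ j ∈ Finset.range t, Amon q (a * q ^ (2 * (k : ℤ) - 1 - 2 * (j : ℤ)))) ∧
      (∀ t ≤ k - 1,
        (chiW q (k + 1) a * chiW q (k - 1) (a * q ^ 2)).coeff
          (mka q k a + mka q k (a * q ^ 2)
            - ∑ j ∈ Finset.range t, Amon q (a * q ^ (2 * (k : ℤ) - 1 - 2 * (j : ℤ)))) = 1) ∧
      ((mka q k a + mka q k (a * q ^ 2)
            - ∑ j ∈ Finset.range k, Amon q (a * q ^ (2 * (k : ℤ) - 1 - 2 * (j : ℤ))))
          ∈ (chiW q k a * chiW q k (a * q ^ 2)).coeff.support ∧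
        Dominant (mka q k a + mka q k (a * q ^ 2)
            - ∑ j ∈ Finset.range k, Amon q (a * q ^ (2 * (k : ℤ) - 1 - 2 * (j : ℤ)))) ∧
        (chiW q (k + 1) a * chiW q (k - 1) (a * q ^ 2)).coeff
          (mka q k a + mka q k (a * q ^ 2)
            - ∑ j ∈ Finset.range k, Amon q (a * q ^ (2 * (k : ℤ) - 1 - 2 * (j : ℤ)))) = 0) := by
  obtain ⟨m, rfl⟩ : ∃ m, k = m + 1 := ⟨k - 1, by omega⟩
  clear hk
  simp only [Nat.add_sub_cancel]
  have he : Function.Injective (ee (q := q) (a := a)) := ee_inj hq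
  have hphi_eq : ∀ w : (ℤ →₀ ℤ), phi q a w = Finsupp.mapDomain (ee q a) w := fun w => rfl
  have hphi_inj : Function.Injective (phi q a) := fun x y h =>
    Finsupp.mapDomain_injective he h
  have hval : ∀ (w : ℤ →₀ ℤ) (n : ℤ), (phi q a w) (ee q a n) = w n := by
    intro w n
    rw [hphi_eq]
    exact Finsupp.mapDomain_apply he w n
  have hdomphi : ∀ w : (ℤ →₀ ℤ), (∀ n, 0 ≤ w n) → Dominant (phi q a w) := by
    intro w hw b
    rw [hphi_eq]
    by_cases hb : b ∈ Set.range (ee q a)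
    · obtain ⟨n, rfl⟩ := hb
      rw [Finsupp.mapDomain_apply he]
      exact hw n
    · rw [Finsupp.mapDomain_notin_range _ _ hb]
  have ha0 : a = ee q a 0 := by rw [ee, zpow_zero, mul_one]
  have ha2 : a * q ^ 2 = ee q a 2 := by
    rw [ee, show ((2:ℤ)) = ((2:ℕ):ℤ) by norm_num, zpow_natCast]
  have hT : ∀ t : ℕ, mka q (m+1) a + mka q (m+1) (a*q^2)
      - ∑ j ∈ Finset.range t, Amon q (a * q ^ (2 * ((m+1:ℕ):ℤ) - 1 - 2 * (j:ℤ)))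
      = phi q a ((mk' (m+1) 0 + mk' (m+1) 2) - Vp ((m+1:ℕ):ℤ) t) := by
    intro t
    have h1 : mka q (m+1) a = phi q a (mk' (m+1) 0) := by
      conv_lhs => rw [ha0]
      exact mka_phi 0 (m+1)
    have h2 : mka q (m+1) (a*q^2) = phi q a (mk' (m+1) 2) := by
      rw [ha2]; exact mka_phi 2 (m+1)
    have h3 : (∑ j ∈ Finset.range t, Amon q (a * q ^ (2 * ((m+1:ℕ):ℤ) - 1 - 2 * (j:ℤ))))
        = phi q a (Vp ((m+1:ℕ):ℤ) t) := by
      rw [Vp, map_sum]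
      exact Finset.sum_congr rfl fun j _ => Amon_phi _
    rw [h1, h2, h3, ← map_add, ← map_sub]
  have hEtop : ∀ s u : ℕ, ((mk' (m+1) 0 + mk' (m+1) 2)
      - (Ap (2*((m+1:ℕ):ℤ)+1) + Vp ((m+1:ℕ):ℤ) s) - Vp ((m+1:ℕ):ℤ) u)
      (2*((m+1:ℕ):ℤ)+2) = -1 := by
    intro s u
    have hM2 : (mk' (m+1) 0) (2*((m+1:ℕ):ℤ)+2) + (mk' (m+1) 2) (2*((m+1:ℕ):ℤ)+2) = 0 := by
      rw [← Finsupp.add_apply]; exact M_top' m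
    simp only [Finsupp.sub_apply, Finsupp.add_apply]
    rw [Ap_top, Vp_apply_top, Vp_apply_top]
    omega
  have hDtop : ∀ t : ℕ, ((mk' (m+1) 0 + mk' (m+1) 2) - Vp ((m+1:ℕ):ℤ) t)
      (2*((m+1:ℕ):ℤ)+2) = 0 := by
    intro t
    have hM2 : (mk' (m+1) 0) (2*((m+1:ℕ):ℤ)+2) + (mk' (m+1) 2) (2*((m+1:ℕ):ℤ)+2) = 0 := by
      rw [← Finsupp.add_apply]; exact M_top' m
    simp only [Finsupp.sub_apply, Finsupp.add_apply]
    rw [Vp_apply_top]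
    omega
  have hEneq : ∀ s u t : ℕ,
      phi q a ((mk' (m+1) 0 + mk' (m+1) 2) - (Ap (2*((m+1:ℕ):ℤ)+1) + Vp ((m+1:ℕ):ℤ) s)
        - Vp ((m+1:ℕ):ℤ) u)
      ≠ phi q a ((mk' (m+1) 0 + mk' (m+1) 2) - Vp ((m+1:ℕ):ℤ) t) := by
    intro s u t h
    have h1 := DFunLike.congr_fun (hphi_inj h) (2*((m+1:ℕ):ℤ)+2)
    rw [hEtop, hDtop] at h1
    omega
  have hEnotdom : ∀ s u : ℕ, ¬ Dominant (phi q a ((mk' (m+1) 0 + mk' (m+1) 2)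
      - (Ap (2*((m+1:ℕ):ℤ)+1) + Vp ((m+1:ℕ):ℤ) s) - Vp ((m+1:ℕ):ℤ) u)) := by
    intro s u hd
    have h1 := hd (ee q a (2*((m+1:ℕ):ℤ)+2))
    rw [hval, hEtop] at h1
    omega
  have hDdom : ∀ t ≤ m+1, Dominant (phi q a ((mk' (m+1) 0 + mk' (m+1) 2)
      - Vp ((m+1:ℕ):ℤ) t)) := by
    intro t ht
    have hw : (mk' (m+1) 0 + mk' (m+1) 2) - Vp ((m+1:ℕ):ℤ) t
        = mk' (m+1-t) 0 + mk' (m+1-t) 2 := by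
      rw [Mid' m t ht]
      abel
    rw [hw]
    exact hdomphi _ fun n => by
      rw [Finsupp.add_apply]
      exact add_nonneg (mk'_nonneg _ _ _) (mk'_nonneg _ _ _)
  have hP2 : chiW q (m+1+1) a * chiW q m (a*q^2)
      = (∑ u ∈ Finset.range (m+1), X (phi q a ((mk' (m+1) 0 + mk' (m+1) 2)
          - Vp ((m+1:ℕ):ℤ) u)))
      + ∑ s ∈ Finset.range (m+1+1), ∑ u ∈ Finset.range (m+1),
          X (phi q a ((mk' (m+1) 0 + mk' (m+1) 2)
            - (Ap (2*((m+1:ℕ):ℤ)+1) + Vp ((m+1:ℕ):ℤ) s) - Vp ((m+1:ℕ):ℤ) u)) := by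
    rw [prod_phi' 0 2 a (a*q^2) ha0 ha2 (m+1+1) m]
    rw [Finset.sum_range_succ']
    have hA : (∑ u ∈ Finset.range (m+1),
        X (phi q a ((mk' (m+1+1) 0 + mk' m 2) - Wp 0 (m+1+1) 0 - Wp 2 m u)))
        = ∑ u ∈ Finset.range (m+1), X (phi q a ((mk' (m+1) 0 + mk' (m+1) 2)
          - Vp ((m+1:ℕ):ℤ) u)) := by
      refine Finset.sum_congr rfl fun u _ => ?_
      rw [Wp_zero, sub_zero, Wp_as_Vp2, Msplit]
    have hB : (∑ s ∈ Finset.range (m+1+1), ∑ u ∈ Finset.range (m+1),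
        X (phi q a ((mk' (m+1+1) 0 + mk' m 2) - Wp 0 (m+1+1) (s+1) - Wp 2 m u)))
        = ∑ s ∈ Finset.range (m+1+1), ∑ u ∈ Finset.range (m+1),
          X (phi q a ((mk' (m+1) 0 + mk' (m+1) 2)
            - (Ap (2*((m+1:ℕ):ℤ)+1) + Vp ((m+1:ℕ):ℤ) s) - Vp ((m+1:ℕ):ℤ) u)) := by
      refine Finset.sum_congr rfl fun s _ => Finset.sum_congr rfl fun u _ => ?_
      rw [Wp0_succ, Wp_as_Vp2, Msplit]
    rw [hA, hB, add_comm]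
  have hprodval : ∀ mm : Mon, (chiW q (m+1+1) a * chiW q m (a*q^2)).coeff mm
      = (∑ u ∈ Finset.range (m+1),
          if phi q a ((mk' (m+1) 0 + mk' (m+1) 2) - Vp ((m+1:ℕ):ℤ) u) = mm
          then (1:ℤ) else 0)
      + ∑ s ∈ Finset.range (m+1+1), ∑ u ∈ Finset.range (m+1),
          if phi q a ((mk' (m+1) 0 + mk' (m+1) 2)
            - (Ap (2*((m+1:ℕ):ℤ)+1) + Vp ((m+1:ℕ):ℤ) s) - Vp ((m+1:ℕ):ℤ) u) = mm
          then (1:ℤ) else 0 := by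
    intro mm
    rw [hP2, AddMonoidAlgebra.coeff_add, Finsupp.add_apply, happly, AddMonoidAlgebra.coeff_sum,
      Finsupp.finset_sum_apply]
    congr 1
    exact Finset.sum_congr rfl fun s _ => happly _ _ _
  have hDcoeff : ∀ t : ℕ, (chiW q (m+1+1) a * chiW q m (a*q^2)).coeff
      (phi q a ((mk' (m+1) 0 + mk' (m+1) 2) - Vp ((m+1:ℕ):ℤ) t))
      = if t < m+1 then 1 else 0 := by
    intro t
    rw [hprodval]
    have hz : (∑ s ∈ Finset.range (m+1+1), ∑ u ∈ Finset.range (m+1),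
        if phi q a ((mk' (m+1) 0 + mk' (m+1) 2)
          - (Ap (2*((m+1:ℕ):ℤ)+1) + Vp ((m+1:ℕ):ℤ) s) - Vp ((m+1:ℕ):ℤ) u)
          = phi q a ((mk' (m+1) 0 + mk' (m+1) 2) - Vp ((m+1:ℕ):ℤ) t)
        then (1:ℤ) else 0) = 0 :=
      Finset.sum_eq_zero fun s _ => Finset.sum_eq_zero fun u _ => if_neg (hEneq s u t)
    rw [hz, add_zero]
    have hiff : ∀ u : ℕ,
        (phi q a ((mk' (m+1) 0 + mk' (m+1) 2) - Vp ((m+1:ℕ):ℤ) u)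
          = phi q a ((mk' (m+1) 0 + mk' (m+1) 2) - Vp ((m+1:ℕ):ℤ) t)) ↔ u = t := by
      intro u
      constructor
      · intro h
        exact Vp_inj _ (sub_right_injective (hphi_inj h))
      · rintro rfl; rfl
    have hc : (∑ u ∈ Finset.range (m+1),
        if phi q a ((mk' (m+1) 0 + mk' (m+1) 2) - Vp ((m+1:ℕ):ℤ) u)
          = phi q a ((mk' (m+1) 0 + mk' (m+1) 2) - Vp ((m+1:ℕ):ℤ) t)
        then (1:ℤ) else 0)
        = ∑ u ∈ Finset.range (m+1), if u = t then (1:ℤ) else 0 :=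
      Finset.sum_congr rfl fun u _ => if_congr (hiff u) rfl rfl
    rw [hc, Finset.sum_ite_eq' (Finset.range (m+1)) t fun _ => (1:ℤ)]
    exact if_congr (by simp [Finset.mem_range]) rfl rfl
  refine ⟨?_, ?_, ?_, ?_, ?_⟩
  · -- part 1
    intro mm
    constructor
    · rintro ⟨hsup, hdomm⟩
      rw [Finsupp.mem_support_iff, hprodval mm] at hsup
      have h2z : (∑ s ∈ Finset.range (m+1+1), ∑ u ∈ Finset.range (m+1),
          if phi q a ((mk' (m+1) 0 + mk' (m+1) 2)
            - (Ap (2*((m+1:ℕ):ℤ)+1) + Vp ((m+1:ℕ):ℤ) s) - Vp ((m+1:ℕ):ℤ) u) = mm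
          then (1:ℤ) else 0) = 0 := by
        refine Finset.sum_eq_zero fun s _ => Finset.sum_eq_zero fun u _ => if_neg ?_
        intro hc
        exact (hc ▸ hEnotdom s u) hdomm
      rw [h2z, add_zero] at hsup
      obtain ⟨u, hu, hne⟩ := Finset.exists_ne_zero_of_sum_ne_zero hsup
      have hcond : phi q a ((mk' (m+1) 0 + mk' (m+1) 2) - Vp ((m+1:ℕ):ℤ) u) = mm := by
        by_contra hcc
        rw [if_neg hcc] at hne
        exact hne rfl
      have humem := Finset.mem_range.1 hu
      exact ⟨u, by omega, by rw [hT u]; exact hcond.symm⟩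
    · rintro ⟨t, ht, rfl⟩
      constructor
      · rw [Finsupp.mem_support_iff, hT t, hDcoeff t, if_pos (by omega)]
        norm_num
      · rw [hT t]
        exact hDdom t (by omega)
  · -- part 2
    intro t ht
    rw [hT t, hDcoeff t, if_pos (by omega)]
  · -- part 3a : support in chiW_k * chiW_k
    rw [hT (m+1), Finsupp.mem_support_iff]
    rw [prod_phi' 0 2 a (a*q^2) ha0 ha2 (m+1) (m+1)]
    have hv : ((∑ s ∈ Finset.range (m+1+1), ∑ u ∈ Finset.range (m+1+1),
        X (phi q a ((mk' (m+1) 0 + mk' (m+1) 2) - Wp 0 (m+1) s - Wp 2 (m+1) u))) : Rng).coeff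
        (phi q a ((mk' (m+1) 0 + mk' (m+1) 2) - Vp ((m+1:ℕ):ℤ) (m+1)))
        = ∑ s ∈ Finset.range (m+1+1), ∑ u ∈ Finset.range (m+1+1),
          if phi q a ((mk' (m+1) 0 + mk' (m+1) 2) - Wp 0 (m+1) s - Wp 2 (m+1) u)
            = phi q a ((mk' (m+1) 0 + mk' (m+1) 2) - Vp ((m+1:ℕ):ℤ) (m+1))
          then (1:ℤ) else 0 := by
      rw [AddMonoidAlgebra.coeff_sum, Finsupp.finset_sum_apply]
      exact Finset.sum_congr rfl fun s _ => happly _ _ _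
    rw [hv]
    have hterm : phi q a ((mk' (m+1) 0 + mk' (m+1) 2) - Wp 0 (m+1) (m+1) - Wp 2 (m+1) 0)
        = phi q a ((mk' (m+1) 0 + mk' (m+1) 2) - Vp ((m+1:ℕ):ℤ) (m+1)) := by
      rw [Wp_zero, sub_zero, Wp_as_Vp0]
    have hinner : (1:ℤ) ≤ ∑ u ∈ Finset.range (m+1+1),
        if phi q a ((mk' (m+1) 0 + mk' (m+1) 2) - Wp 0 (m+1) (m+1) - Wp 2 (m+1) u)
          = phi q a ((mk' (m+1) 0 + mk' (m+1) 2) - Vp ((m+1:ℕ):ℤ) (m+1))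
        then (1:ℤ) else 0 := by
      have h0 : (if phi q a ((mk' (m+1) 0 + mk' (m+1) 2)
          - Wp 0 (m+1) (m+1) - Wp 2 (m+1) 0)
          = phi q a ((mk' (m+1) 0 + mk' (m+1) 2) - Vp ((m+1:ℕ):ℤ) (m+1))
        then (1:ℤ) else 0) = 1 := if_pos hterm
      calc (1:ℤ) = _ := h0.symm
        _ ≤ _ := Finset.single_le_sum (f := fun u => if phi q a ((mk' (m+1) 0 + mk' (m+1) 2)
            - Wp 0 (m+1) (m+1) - Wp 2 (m+1) u)
            = phi q a ((mk' (m+1) 0 + mk' (m+1) 2) - Vp ((m+1:ℕ):ℤ) (m+1))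
          then (1:ℤ) else 0)
          (fun u _ => by positivity) (Finset.mem_range.2 (show 0 < m+1+1 by omega))
    have htotal : (1:ℤ) ≤ ∑ s ∈ Finset.range (m+1+1), ∑ u ∈ Finset.range (m+1+1),
        if phi q a ((mk' (m+1) 0 + mk' (m+1) 2) - Wp 0 (m+1) s - Wp 2 (m+1) u)
          = phi q a ((mk' (m+1) 0 + mk' (m+1) 2) - Vp ((m+1:ℕ):ℤ) (m+1))
        then (1:ℤ) else 0 := by
      refine le_trans hinner ?_
      refine Finset.single_le_sum (f := fun s => ∑ u ∈ Finset.range (m+1+1),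
        if phi q a ((mk' (m+1) 0 + mk' (m+1) 2) - Wp 0 (m+1) s - Wp 2 (m+1) u)
          = phi q a ((mk' (m+1) 0 + mk' (m+1) 2) - Vp ((m+1:ℕ):ℤ) (m+1))
        then (1:ℤ) else 0) (fun s _ => Finset.sum_nonneg fun u _ => by positivity)
        (Finset.mem_range.2 (by omega))
    exact ne_of_gt (lt_of_lt_of_le zero_lt_one htotal)
  · -- part 3b : dominance
    rw [hT (m+1)]
    exact hDdom (m+1) le_rfl
  · -- part 3c : zero coefficient
    rw [hT (m+1), hDcoeff (m+1), if_neg (by omega)]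

end MainProof
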